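/- Let J ∈ ℝ^{m×n} and v ∈ ℝᵐ, and form the block matrix J_SSV = [J, −2 diag(v)] ∈ ℝ^{m×(n+m)}. Let A = {i : v_i = 0}. Then J_SSV has full row rank m if and only if the rows of J indexed by A are linearly independent. -/

import Mathlib

open Matrix

theorem stmt16 {m n : ℕ} (J : Matrix (Fin m) (Fin n) ℝ) (v : Fin m → ℝ) :
    LinearIndependent ℝ
      (fun i : Fin m => (Matrix.fromCols J ((-2 : ℝ) • Matrix.diagonal v)) i) ↔
    LinearIndependent ℝ (fun i : {i : Fin m // v i = 0} => J i.1) := by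
  classical
  rw [Fintype.linearIndependent_iff, Fintype.linearIndependent_iff]
  have hsub : ∀ (f : Fin m → ℝ),
      (∀ i, v i ≠ 0 → f i = 0) → ∑ i, f i = ∑ a : {i : Fin m // v i = 0}, f a.1 := by
    intro f hf
    rw [← Finset.sum_filter_of_ne (s := Finset.univ) (p := fun i => v i = 0)
      (by intro x _ hx; by_contra hvx; exact hx (hf x hvx)),
      Finset.sum_subtype (p := fun i => v i = 0)
        (s := Finset.univ.filter (fun i => v i = 0)) (by simp) f]
  constructor
  · intro h c hc a
    set g : Fin m → ℝ := fun i => if hi : v i = 0 then c ⟨i, hi⟩ else 0 with hg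
    have key := h g ?_ a.1
    · simpa [hg, a.2] using key
    · funext s
      have h0 : (0 : (Fin n ⊕ Fin m) → ℝ) s = 0 := rfl
      simp only [Finset.sum_apply, Pi.smul_apply, smul_eq_mul]
      cases s with
      | inl j =>
        have := congrFun hc j
        simp only [Finset.sum_apply, Pi.smul_apply, smul_eq_mul, Pi.zero_apply] at this
        rw [h0]
        calc ∑ i, g i * (fromCols J ((-2 : ℝ) • diagonal v)) i (Sum.inl j)
            = ∑ i, g i * J i j := by simp [fromCols]
          _ = ∑ a : {i : Fin m // v i = 0}, g a.1 * J a.1 j := by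
              apply hsub; intro i hi; simp [hg, hi]
          _ = ∑ a : {i : Fin m // v i = 0}, c a * J a.1 j := by
              apply Finset.sum_congr rfl; intro a _; simp [hg, a.2]
          _ = 0 := this
      | inr j =>
        rw [h0]
        have : ∀ i, g i * (fromCols J ((-2 : ℝ) • diagonal v)) i (Sum.inr j) = 0 := by
          intro i
          by_cases hi : v i = 0
          · by_cases hij : i = j
            · subst hij; simp [fromCols, diagonal, hi]
            · simp [fromCols, diagonal_apply_ne _ hij]
          · simp [hg, hi]
        exact Finset.sum_eq_zero fun i _ => this i
  · intro h c hc
    have hzero : ∀ i, v i ≠ 0 → c i = 0 := by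
      intro i hi
      have := congrFun hc (Sum.inr i)
      simp only [Finset.sum_apply, Pi.smul_apply, smul_eq_mul, Pi.zero_apply] at this
      have hsum : ∑ k, c k * (fromCols J ((-2 : ℝ) • diagonal v)) k (Sum.inr i)
          = c i * (-2 * v i) := by
        rw [Finset.sum_eq_single i]
        · simp [fromCols]
        · intro k _ hk; simp [fromCols, diagonal_apply_ne _ hk]
        · simp
      rw [hsum] at this
      rcases mul_eq_zero.mp this with h1 | h2
      · exact h1
      · exact absurd (by linarith [mul_eq_zero.mp h2]) (by simp [hi] : ¬ v i = 0)
    intro i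
    by_cases hvi : v i = 0
    · refine h (fun a => c a.1) ?_ ⟨i, hvi⟩
      funext j
      simp only [Finset.sum_apply, Pi.smul_apply, smul_eq_mul, Pi.zero_apply]
      have := congrFun hc (Sum.inl j)
      simp only [Finset.sum_apply, Pi.smul_apply, smul_eq_mul, Pi.zero_apply] at this
      have hJ : ∑ k, c k * J k j = 0 := by
        rw [← this]; apply Finset.sum_congr rfl; intro k _; simp [fromCols]
      rw [← hsub (fun k => c k * J k j) (fun i hi => by simp [hzero i hi])]
      exact hJ
    · exact hzero i hvi
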